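/- Let d ≥ 1 and a₁,…,a_d ≥ 1 be integers, and let A be a subset of the vertex set of the grid [a₁]×⋯×[a_d]. Suppose that for every j ∈ {1,…,d}, every path in the grid from a vertex of the face L_{j,1} to a vertex of the face L_{j,a_j} contains a vertex of A. Then A percolates under the d-neighbour bootstrap process in [a₁]×⋯×[a_d]. -/

import Mathlib

namespace BP

/-- The `r`-neighbour bootstrap closure of `A₀` in `G`: the smallest set `S` containing `A₀`
such that every vertex with at least `r` neighbours in `S` belongs to `S`. -/
def closure {V : Type*} (G : SimpleGraph V) (r : ℕ) (A₀ : Set V) : Set V :=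
  ⋂₀ {S : Set V | A₀ ⊆ S ∧ ∀ v : V, r ≤ (G.neighborSet v ∩ S).ncard → v ∈ S}

/-- `A₀` percolates under the `r`-neighbour bootstrap process in `G`. -/
def Percolates {V : Type*} (G : SimpleGraph V) (r : ℕ) (A₀ : Set V) : Prop :=
  closure G r A₀ = Set.univ

/-- The minimum cardinality of a set percolating under the `r`-neighbour process in `G`. -/
noncomputable def minPerc {V : Type*} (G : SimpleGraph V) (r : ℕ) : ℕ :=
  sInf {n : ℕ | ∃ A₀ : Set V, Percolates G r A₀ ∧ A₀.ncard = n}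

/-- The `d`-dimensional grid graph `[a 0] × ⋯ × [a (d-1)]`. -/
def gridD (d : ℕ) (a : Fin d → ℕ) : SimpleGraph ((i : Fin d) → Fin (a i)) where
  Adj u v := ∃ j : Fin d,
    ((u j : ℕ) + 1 = (v j : ℕ) ∨ (v j : ℕ) + 1 = (u j : ℕ)) ∧
      ∀ i : Fin d, i ≠ j → u i = v i
  symm := by
    constructor
    rintro u v ⟨j, hj, h⟩
    exact ⟨j, hj.symm, fun i hi => (h i hi).symm⟩
  loopless := by
    constructor
    rintro u ⟨j, hj, -⟩
    omega

/-- **Theorem (Statement 9).** If every path between the two faces in each direction meets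
`A`, then `A` percolates for the `d`-neighbour process in the grid. -/
theorem separating_set_percolates (d : ℕ) (hd : 1 ≤ d) (a : Fin d → ℕ)
    (ha : ∀ i, 1 ≤ a i) (A : Set ((i : Fin d) → Fin (a i)))
    (hsep : ∀ j : Fin d, ∀ u v : (i : Fin d) → Fin (a i),
      (u j : ℕ) = 0 → (v j : ℕ) + 1 = a j →
      ∀ p : (gridD d a).Walk u v, p.IsPath → ∃ w ∈ p.support, w ∈ A) :
    Percolates (gridD d a) d A := by
  classical
  set G := gridD d a with hGdef
  set C := closure G d A with hCdef
  have hAC : A ⊆ C := fun x hx => Set.mem_sInter.2 fun S hS => hS.1 hx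
  have hclosed : ∀ v, d ≤ ((G.neighborSet v ∩ C)).ncard → v ∈ C := by
    intro v hv
    refine Set.mem_sInter.2 fun S hS => hS.2 v ?_
    refine le_trans hv (Set.ncard_le_ncard ?_ (Set.toFinite _))
    exact Set.inter_subset_inter_right _ (Set.sInter_subset_of_mem hS)
  rw [Percolates]
  by_contra hne
  obtain ⟨v₀, hv₀⟩ : ∃ v, v ∉ C := by
    by_contra h; push_neg at h
    exact hne (Set.eq_univ_of_forall h)
  set D : Set ((i : Fin d) → Fin (a i)) :=
    {w | ∃ p : G.Walk v₀ w, ∀ x ∈ p.support, x ∉ C} with hDdef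
  have hv₀D : v₀ ∈ D := by
    refine ⟨SimpleGraph.Walk.nil, ?_⟩
    intro x hx
    simp only [SimpleGraph.Walk.support_nil, List.mem_singleton] at hx
    subst hx; exact hv₀
  have hDC : ∀ w ∈ D, w ∉ C := by
    rintro w ⟨p, hp⟩
    exact hp w p.end_mem_support
  have hext : ∀ w ∈ D, ∀ u, G.Adj w u → u ∉ C → u ∈ D := by
    rintro w ⟨p, hp⟩ u hadj hu
    refine ⟨p.concat hadj, ?_⟩
    intro x hx
    rw [SimpleGraph.Walk.support_concat] at hx
    simp only [List.concat_eq_append, List.mem_append, List.mem_singleton] at hx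
    rcases hx with hx | rfl
    · exact hp x hx
    · exact hu
  by_cases hcross : ∃ j : Fin d, (∃ u ∈ D, (u j : ℕ) = 0) ∧ (∃ w ∈ D, (w j : ℕ) + 1 = a j)
  · obtain ⟨j, ⟨u, ⟨p, hp⟩, hu0⟩, ⟨w, ⟨q, hq⟩, hw1⟩⟩ := hcross
    obtain ⟨x, hx, hxA⟩ := hsep j u w hu0 hw1 (p.reverse.append q).bypass
      (p.reverse.append q).bypass_isPath
    have hxr : x ∈ (p.reverse.append q).support :=
      (p.reverse.append q).support_bypass_subset hx
    rw [SimpleGraph.Walk.mem_support_append_iff, SimpleGraph.Walk.support_reverse,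
      List.mem_reverse] at hxr
    rcases hxr with h | h
    · exact hp x h (hAC hxA)
    · exact hq x h (hAC hxA)
  · push_neg at hcross
    -- hcross : ∀ j, (∃ u ∈ D, (u j : ℕ) = 0) → ∀ w ∈ D, (w j : ℕ) + 1 ≠ a j
    set σ : Fin d → Prop := fun j => ∃ u ∈ D, (u j : ℕ) = 0 with hσdef
    set f : ((i : Fin d) → Fin (a i)) → ℤ :=
      fun w => ∑ j : Fin d, (if σ j then (w j : ℤ) else -(w j : ℤ)) with hfdef
    obtain ⟨v, hvD, hvmax⟩ := Set.exists_max_image D f (Set.toFinite D) ⟨v₀, hv₀D⟩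
    -- for each direction, produce a neighbour of v in C
    have key : ∀ j : Fin d, ∃ c : Fin (a j),
        ((v j : ℕ) + 1 = (c : ℕ) ∨ (c : ℕ) + 1 = (v j : ℕ)) ∧
        (if σ j then (c : ℤ) else -(c : ℤ)) =
          (if σ j then ((v j : ℕ) : ℤ) else -((v j : ℕ) : ℤ)) + 1 := by
      intro j
      by_cases hj : σ j
      · -- push up: v j + 1 < a j
        have htop : (v j : ℕ) + 1 ≠ a j := hcross j hj v hvD
        have hlt : (v j : ℕ) + 1 < a j := by
          have := (v j).isLt; omega
        refine ⟨⟨(v j : ℕ) + 1, hlt⟩, Or.inl rfl, ?_⟩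
        simp only [if_pos hj]
        push_cast
        ring
      · -- push down: v j ≠ 0
        have hbot : (v j : ℕ) ≠ 0 := by
          intro h0
          exact hj ⟨v, hvD, h0⟩
        have hlt : (v j : ℕ) - 1 < a j := by
          have := (v j).isLt; omega
        refine ⟨⟨(v j : ℕ) - 1, hlt⟩, Or.inr (by simp; omega), ?_⟩
        simp only [if_neg hj]
        have : (((v j : ℕ) - 1 : ℕ) : ℤ) = ((v j : ℕ) : ℤ) - 1 := by
          omega
        simp only [this]
        ring
    choose c hc1 hc2 using key
    -- the neighbours
    have hne' : ∀ j, c j ≠ v j := by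
      intro j h
      have := hc1 j
      rw [h] at this
      omega
    have hadj : ∀ j, G.Adj v (Function.update v j (c j)) := by
      intro j
      refine ⟨j, ?_, ?_⟩
      · rw [Function.update_self]
        exact hc1 j
      · intro i hi
        rw [Function.update_of_ne hi]
    have hfval : ∀ j, f (Function.update v j (c j)) = f v + 1 := by
      intro j
      have hsplit : f (Function.update v j (c j)) - f v =
          ∑ j' : Fin d, ((if σ j' then ((Function.update v j (c j)) j' : ℤ)
              else -((Function.update v j (c j)) j' : ℤ)) -
            (if σ j' then (v j' : ℤ) else -(v j' : ℤ))) := by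
        rw [Finset.sum_sub_distrib]
      rw [Finset.sum_eq_single_of_mem j (Finset.mem_univ j)] at hsplit
      · rw [Function.update_self] at hsplit
        have := hc2 j
        omega
      · intro i _ hij
        rw [Function.update_of_ne hij]
        ring
    have hC : ∀ j, Function.update v j (c j) ∈ C := by
      intro j
      by_contra hnotC
      have hmem : Function.update v j (c j) ∈ D := hext v hvD _ (hadj j) hnotC
      have := hvmax _ hmem
      rw [hfval j] at this
      omega
    -- count: v has at least d neighbours in C
    have hinj : Function.Injective (fun j => Function.update v j (c j)) := by
      intro j k h
      by_contra hjk
      have h1 : Function.update v j (c j) j = Function.update v k (c k) j := congrFun h j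
      rw [Function.update_self, Function.update_of_ne hjk] at h1
      exact hne' j h1
    have hsub : ∀ j, Function.update v j (c j) ∈ G.neighborSet v ∩ C :=
      fun j => ⟨hadj j, hC j⟩
    have hcard : d ≤ (G.neighborSet v ∩ C).ncard := by
      have hfin : (G.neighborSet v ∩ C).Finite := Set.toFinite _
      calc d = (Finset.univ.image (fun j => Function.update v j (c j))).card := by
              rw [Finset.card_image_of_injective _ hinj, Finset.card_univ, Fintype.card_fin]
        _ ≤ hfin.toFinset.card := by
              apply Finset.card_le_card
              intro x hx
              rw [Finset.mem_image] at hx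
              obtain ⟨j, -, rfl⟩ := hx
              rw [Set.Finite.mem_toFinset]
              exact hsub j
        _ = (G.neighborSet v ∩ C).ncard := (Set.ncard_eq_toFinset_card _ hfin).symm
    exact hDC v hvD (hclosed v hcard)

end BP
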